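/- Let λ > 0 and let Δ_λ be the self-adjoint bounded operator on ℓ²(ℕ) given by (Δ_λ f)(n) = a_n^λ f(n+1) − 2f(n) + a_{n-1}^λ f(n-1). Then −Δ_λ is positive: for every f ∈ ℓ²(ℕ), Re ⟨Δ_λ f, f⟩ ≤ 0. -/
import Mathlib

/-- The coefficients `a_n^λ`. -/
noncomputable def aUltra (l : ℝ) (n : ℕ) : ℝ :=
  Real.sqrt ((2 * l + n) * ((n : ℝ) + 1) / (((n : ℝ) + l) * ((n : ℝ) + l + 1)))

/-- The discrete ultraspherical Laplacian `Δ_λ`, with `a_{-1}^λ = 0`. -/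
noncomputable def deltaUltra (l : ℝ) (f : ℕ → ℂ) (n : ℕ) : ℂ :=
  (aUltra l n : ℂ) * f (n + 1) - 2 * f n +
    (if n = 0 then 0 else (aUltra l (n - 1) : ℂ) * f (n - 1))

lemma aUltra_nonneg (l : ℝ) (n : ℕ) : 0 ≤ aUltra l n := Real.sqrt_nonneg _

lemma aUltra_sq (l : ℝ) (hl : 0 < l) (n : ℕ) :
    aUltra l n ^ 2 = (((n:ℝ) + 2*l)/((n:ℝ)+l)) * (((n:ℝ)+1)/((n:ℝ)+1+l)) := by
  have hn : (0:ℝ) ≤ (n:ℝ) := Nat.cast_nonneg n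
  have h1 : (0:ℝ) ≤ (2 * l + n) * ((n : ℝ) + 1) / (((n : ℝ) + l) * ((n : ℝ) + l + 1)) := by
    positivity
  rw [aUltra, Real.sq_sqrt h1]
  have h2 : (n:ℝ) + l ≠ 0 := by positivity
  have h3 : (n:ℝ) + l + 1 ≠ 0 := by positivity
  field_simp
  ring

lemma aUltra_key (l : ℝ) (hl : 0 < l) (n : ℕ) (x y : ℝ) :
    2 * (aUltra l n * (x * y)) ≤
      (((n:ℝ) + 2*l)/((n:ℝ)+l)) * x^2 + (((n:ℝ)+1)/((n:ℝ)+1+l)) * y^2 := by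
  have hn : (0:ℝ) ≤ (n:ℝ) := Nat.cast_nonneg n
  set p := ((n:ℝ) + 2*l)/((n:ℝ)+l) with hpdef
  set q := ((n:ℝ)+1)/((n:ℝ)+1+l) with hqdef
  have hp : 0 ≤ p := by positivity
  have hq : 0 ≤ q := by positivity
  have ha : aUltra l n = Real.sqrt p * Real.sqrt q := by
    rw [← Real.sqrt_mul hp, ← aUltra_sq l hl n, Real.sqrt_sq (aUltra_nonneg l n)]
  have h1 := sq_nonneg (Real.sqrt p * x - Real.sqrt q * y)
  have hps := Real.sq_sqrt hp
  have hqs := Real.sq_sqrt hq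
  rw [ha]
  nlinarith [Real.sqrt_nonneg p, Real.sqrt_nonneg q]

lemma aUltra_le_two (l : ℝ) (hl : 0 < l) (n : ℕ) : aUltra l n ≤ 2 := by
  have hn : (0:ℝ) ≤ (n:ℝ) := Nat.cast_nonneg n
  have h1 : aUltra l n ^ 2 ≤ 2 := by
    rw [aUltra_sq l hl n]
    have hp : ((n:ℝ) + 2*l)/((n:ℝ)+l) ≤ 2 := by
      rw [div_le_iff₀ (by positivity)]; linarith
    have hq : (((n:ℝ)+1)/((n:ℝ)+1+l)) ≤ 1 := by
      rw [div_le_one (by positivity)]; linarith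
    have hp0 : (0:ℝ) ≤ ((n:ℝ) + 2*l)/((n:ℝ)+l) := by positivity
    have hq0 : (0:ℝ) ≤ (((n:ℝ)+1)/((n:ℝ)+1+l)) := by positivity
    nlinarith
  nlinarith [aUltra_nonneg l n]

theorem deltaUltra_negative (l : ℝ) (hl : 0 < l) (f : ℕ → ℂ) (hf : Memℓp f 2) :
    (∑' n : ℕ, deltaUltra l f n * (starRingEnd ℂ) (f n)).re ≤ 0 := by
  classical
  set F : ℕ → ℝ := fun n => ‖f n‖ ^ 2 with hFdef
  have hF : Summable F := by
    have h := hf.summable (p := 2) (by norm_num)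
    have h2 : ∀ n : ℕ, ‖f n‖ ^ ((2:ENNReal).toReal) = F n := by
      intro n
      rw [show ((2:ENNReal)).toReal = ((2:ℕ):ℝ) by norm_num, Real.rpow_natCast]
    exact (summable_congr h2).1 h
  have hF1 : Summable (fun n => F (n+1)) := (summable_nat_add_iff 1).2 hF
  have hFnn : ∀ n, 0 ≤ F n := fun n => by positivity
  -- cross term
  set u : ℕ → ℝ := fun n => aUltra l n * (f (n+1) * (starRingEnd ℂ) (f n)).re with hudef
  have hcross : ∀ n, |(f (n+1) * (starRingEnd ℂ) (f n)).re| ≤ ‖f (n+1)‖ * ‖f n‖ := by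
    intro n
    calc |(f (n+1) * (starRingEnd ℂ) (f n)).re| ≤ ‖f (n+1) * (starRingEnd ℂ) (f n)‖ := by
          simpa using Complex.abs_re_le_norm (f (n+1) * (starRingEnd ℂ) (f n))
      _ = ‖f (n+1)‖ * ‖f n‖ := by rw [norm_mul, RCLike.norm_conj]
  have hub : ∀ n, |u n| ≤ F (n+1) + F n := by
    intro n
    have h1 := hcross n
    have h2 := aUltra_nonneg l n
    have h3 := aUltra_le_two l hl n
    have h4 : |u n| ≤ 2 * (‖f (n+1)‖ * ‖f n‖) := by
      rw [hudef]
      simp only [abs_mul, abs_of_nonneg h2]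
      have := mul_le_mul h3 h1 (abs_nonneg _) (by norm_num)
      nlinarith [abs_nonneg (f (n+1) * (starRingEnd ℂ) (f n)).re, mul_nonneg (norm_nonneg (f (n+1))) (norm_nonneg (f n))]
    refine h4.trans ?_
    simp only [hFdef]
    nlinarith [sq_nonneg (‖f (n+1)‖ - ‖f n‖)]
  have hu : Summable u :=
    summable_abs_iff.mp (Summable.of_nonneg_of_le (fun n => abs_nonneg _) hub (hF1.add hF))
  -- reversed cross term
  set v : ℕ → ℝ := fun n => if n = 0 then 0 else
      aUltra l (n-1) * (f (n-1) * (starRingEnd ℂ) (f n)).re with hvdef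
  have hvu : ∀ n, v (n+1) = u n := by
    intro n
    simp only [hvdef, hudef, Nat.succ_ne_zero, if_false, Nat.add_sub_cancel]
    congr 1
    simp [Complex.mul_re, Complex.conj_re, Complex.conj_im]
    ring
  have hv : Summable v := by
    refine (summable_nat_add_iff 1).1 ?_
    simp only [hvu]
    exact hu
  -- summability of the complex series
  have hz : Summable (fun n => deltaUltra l f n * (starRingEnd ℂ) (f n)) := by
    have hz1 : Summable (fun n => (aUltra l n : ℂ) * f (n+1) * (starRingEnd ℂ) (f n)) := by
      refine Summable.of_norm (Summable.of_nonneg_of_le (fun n => norm_nonneg _)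
        (fun n => ?_) (hF1.add hF))
      have h2 := aUltra_nonneg l n
      have h3 := aUltra_le_two l hl n
      simp only [norm_mul, RCLike.norm_conj, Complex.norm_real, Real.norm_eq_abs,
        abs_of_nonneg h2]
      simp only [hFdef]
      nlinarith [sq_nonneg (‖f (n+1)‖ - ‖f n‖), norm_nonneg (f (n+1)), norm_nonneg (f n),
        mul_nonneg (norm_nonneg (f (n+1))) (norm_nonneg (f n))]
    have hz2 : Summable (fun n => (2:ℂ) * f n * (starRingEnd ℂ) (f n)) := by
      refine Summable.of_norm (Summable.of_nonneg_of_le (fun n => norm_nonneg _)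
        (fun n => ?_) (hF.mul_left 2))
      simp only [norm_mul, RCLike.norm_conj, hFdef]
      norm_num [sq, mul_assoc]
    have hz3 : Summable (fun n => (if n = 0 then 0 else (aUltra l (n-1) : ℂ) * f (n-1)) *
        (starRingEnd ℂ) (f n)) := by
      have hm : Summable (fun n => if n = 0 then (0:ℝ) else F (n-1) + F n) := by
        refine (summable_nat_add_iff 1).1 ?_
        simpa using hF.add hF1
      refine Summable.of_norm (Summable.of_nonneg_of_le (fun n => norm_nonneg _)
        (fun n => ?_) hm)
      rcases n with _ | m
      · simp
      · simp only [Nat.succ_ne_zero, if_false, Nat.add_sub_cancel, norm_mul,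
          RCLike.norm_conj, Complex.norm_real, Real.norm_eq_abs,
          abs_of_nonneg (aUltra_nonneg l m)]
        have h3 := aUltra_le_two l hl m
        simp only [hFdef]
        nlinarith [sq_nonneg (‖f m‖ - ‖f (m+1)‖), norm_nonneg (f m), norm_nonneg (f (m+1)),
          mul_nonneg (norm_nonneg (f m)) (norm_nonneg (f (m+1)))]
    have : (fun n => deltaUltra l f n * (starRingEnd ℂ) (f n)) =
        fun n => (aUltra l n : ℂ) * f (n+1) * (starRingEnd ℂ) (f n)
          - (2:ℂ) * f n * (starRingEnd ℂ) (f n)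
          + (if n = 0 then 0 else (aUltra l (n-1) : ℂ) * f (n-1)) * (starRingEnd ℂ) (f n) := by
      funext n
      simp only [deltaUltra]
      ring
    rw [this]
    exact (hz1.sub hz2).add hz3
  rw [Complex.re_tsum hz]
  -- pointwise real-part formula
  have hre : ∀ n, (deltaUltra l f n * (starRingEnd ℂ) (f n)).re = u n - 2 * F n + v n := by
    intro n
    have hsplit : deltaUltra l f n * (starRingEnd ℂ) (f n) =
        (aUltra l n : ℂ) * (f (n+1) * (starRingEnd ℂ) (f n))
          - 2 * (f n * (starRingEnd ℂ) (f n))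
          + (if n = 0 then 0 else (aUltra l (n-1) : ℂ) * (f (n-1) * (starRingEnd ℂ) (f n))) := by
      simp only [deltaUltra]
      split <;> ring
    rw [hsplit]
    have hmc : f n * (starRingEnd ℂ) (f n) = (F n : ℂ) := by
      rw [Complex.mul_conj, hFdef]
      norm_cast
      exact Complex.normSq_eq_norm_sq (f n)
    rw [Complex.add_re, Complex.sub_re, Complex.re_ofReal_mul]
    have e2 : ((2:ℂ) * ((F n : ℝ) : ℂ)).re = 2 * F n := by simp
    rw [hmc, e2]
    have e3 : (if n = 0 then (0:ℂ) else (aUltra l (n-1):ℂ) *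
        (f (n-1) * (starRingEnd ℂ) (f n))).re = v n := by
      rcases n with _ | m
      · simp [hvdef]
      · simp [hvdef, Complex.re_ofReal_mul]
    rw [e3]
  calc (∑' n, (deltaUltra l f n * (starRingEnd ℂ) (f n)).re)
      = ∑' n, (u n - 2 * F n + v n) := by exact tsum_congr hre
    _ = (∑' n, u n) - 2 * (∑' n, F n) + ∑' n, v n := by
        rw [Summable.tsum_add (hu.sub (hF.mul_left 2)) hv,
          Summable.tsum_sub hu (hF.mul_left 2), tsum_mul_left]
    _ = 2 * (∑' n, u n) - 2 * (∑' n, F n) := by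
        have h0 : v 0 = 0 := by simp [hvdef]
        have : (∑' n, v n) = ∑' n, u n := by
          rw [Summable.tsum_eq_zero_add hv, h0, zero_add]
          exact tsum_congr hvu
        rw [this]; ring
    _ ≤ 0 := by
        have key : (∑' n, u n) ≤ ∑' n, F n := by
          set P : ℕ → ℝ := fun n => ((n:ℝ) + 2*l)/((n:ℝ)+l) with hPdef
          set Q : ℕ → ℝ := fun n => (n:ℝ)/((n:ℝ)+l) with hQdef
          have hQsucc : ∀ n : ℕ, Q (n+1) = ((n:ℝ)+1)/((n:ℝ)+1+l) := by
            intro n; simp [hQdef]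
          have hPF : Summable (fun n => P n * F n) := by
            refine Summable.of_nonneg_of_le (fun n => ?_) (fun n => ?_) (hF.mul_left 2)
            · have : 0 ≤ P n := by
                have : (0:ℝ) ≤ (n:ℝ) := Nat.cast_nonneg n
                positivity
              exact mul_nonneg this (hFnn n)
            · have hn : (0:ℝ) ≤ (n:ℝ) := Nat.cast_nonneg n
              have : P n ≤ 2 := by
                rw [hPdef]; rw [div_le_iff₀ (by positivity)]; linarith
              exact mul_le_mul_of_nonneg_right this (hFnn n)
          have hQF1 : Summable (fun n => Q (n+1) * F (n+1)) := by
            refine Summable.of_nonneg_of_le (fun n => ?_) (fun n => ?_) hF1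
            · have hn : (0:ℝ) ≤ (n:ℝ) := Nat.cast_nonneg n
              have : 0 ≤ Q (n+1) := by rw [hQsucc]; positivity
              exact mul_nonneg this (hFnn _)
            · have hn : (0:ℝ) ≤ (n:ℝ) := Nat.cast_nonneg n
              have : Q (n+1) ≤ 1 := by
                rw [hQsucc, div_le_one (by positivity)]; linarith
              nlinarith [hFnn (n+1)]
          have hQF : Summable (fun n => Q n * F n) := by
            refine (summable_nat_add_iff 1).1 ?_
            exact hQF1
          have step1 : (∑' n, u n) ≤ ∑' n, (P n * F n + Q (n+1) * F (n+1)) / 2 := by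
            refine Summable.tsum_le_tsum (fun n => ?_) hu ((hPF.add hQF1).div_const 2)
            have h1 : u n ≤ aUltra l n * (‖f n‖ * ‖f (n+1)‖) := by
              rw [hudef]
              have := (abs_le.1 (hcross n)).2
              have h2 := aUltra_nonneg l n
              calc aUltra l n * (f (n+1) * (starRingEnd ℂ) (f n)).re
                  ≤ aUltra l n * (‖f (n+1)‖ * ‖f n‖) := by
                    exact mul_le_mul_of_nonneg_left this h2
                _ = aUltra l n * (‖f n‖ * ‖f (n+1)‖) := by ring
            refine h1.trans ?_
            have h3 := aUltra_key l hl n (‖f n‖) (‖f (n+1)‖)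
            rw [hQsucc]
            simp only [hPdef, hFdef]
            linarith
          have step2 : (∑' n, (P n * F n + Q (n+1) * F (n+1)) / 2)
              = ((∑' n, P n * F n) + ∑' n, Q (n+1) * F (n+1)) / 2 := by
            rw [← Summable.tsum_add hPF hQF1]
            exact tsum_div_const
          have step3 : (∑' n, Q (n+1) * F (n+1)) = ∑' n, Q n * F n := by
            rw [Summable.tsum_eq_zero_add hQF]
            simp [hQdef]
          have step4 : (∑' n, P n * F n) + (∑' n, Q n * F n) = 2 * ∑' n, F n := by
            rw [← Summable.tsum_add hPF hQF, ← tsum_mul_left]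
            refine tsum_congr fun n => ?_
            have hn : (0:ℝ) ≤ (n:ℝ) := Nat.cast_nonneg n
            have hne : (n:ℝ) + l ≠ 0 := by positivity
            rw [hPdef, hQdef]
            field_simp
            ring
          rw [step2, step3, step4] at step1
          linarith
        linarith
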